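/- Let x ≥ 2. Then Σ_{n ≤ x} φ(λ(n))/λ(n) ≫ x / log log x, where φ is Euler's totient and λ is the Carmichael function. -/

import Mathlib

open Filter Finset Nat

namespace CarmichaelLowerAux

noncomputable section

/-- The set of primes up to `N`. -/
def PP (N : ℕ) : Finset ℕ := Finset.filter Nat.Prime (Finset.range (N + 1))

lemma mem_PP {N p : ℕ} : p ∈ PP N ↔ p ≤ N ∧ p.Prime := by
  simp [PP, Finset.mem_filter, Nat.lt_succ_iff, and_comm]

/-- Chebyshev sum `θ(N) = Σ_{p ≤ N} log p`. -/
def theta (N : ℕ) : ℝ := ∑ p ∈ PP N, Real.log p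

/-- `T(N) = Σ_{p ≤ N} log p / p`. -/
def T (N : ℕ) : ℝ := ∑ p ∈ PP N, Real.log p / p

/-- `Pr N = Σ_{p ≤ N} 1/p`. -/
def Pr (N : ℕ) : ℝ := ∑ p ∈ PP N, 1 / (p : ℝ)

lemma sum_PP_succ (f : ℕ → ℝ) (n : ℕ) :
    ∑ p ∈ PP (n + 1), f p = (∑ p ∈ PP n, f p) + if (n + 1).Prime then f (n + 1) else 0 := by
  unfold PP
  rw [Finset.sum_filter, Finset.sum_range_succ, ← Finset.sum_filter]

lemma theta_le (N : ℕ) : theta N ≤ N * Real.log 4 := by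
  have h4 : ((primorial N : ℕ) : ℝ) ≤ ((4 ^ N : ℕ) : ℝ) := by
    exact_mod_cast primorial_le_4_pow N
  have hpos : (0 : ℝ) < (primorial N : ℝ) := by
    exact_mod_cast primorial_pos N
  have hlog := Real.log_le_log hpos h4
  have hprod : Real.log (primorial N : ℝ) = theta N := by
    unfold theta PP
    rw [primorial]
    push_cast
    rw [Real.log_prod]
    intro p hp
    have := (Finset.mem_filter.1 hp).2
    exact_mod_cast this.pos.ne'
  rw [hprod] at hlog
  calc theta N ≤ Real.log ((4 : ℕ) ^ N : ℕ) := hlog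
    _ = N * Real.log 4 := by push_cast; rw [Real.log_pow]

lemma div_le_factorization {N p : ℕ} (hp : p.Prime) (hN : 1 ≤ N) :
    N / p ≤ (N !).factorization p := by
  rw [← Nat.Prime.pow_dvd_iff_le_factorization hp (Nat.factorial_ne_zero N)]
  rw [Nat.Prime.pow_dvd_factorial_iff hp (Nat.lt_succ_self _)]
  rcases le_or_gt p N with h | h
  · have h1 : 1 ∈ Finset.Ico 1 (Nat.log p N + 1) := by
      have hlog := Nat.log_pos hp.one_lt h
      exact Finset.mem_Ico.2 ⟨le_refl 1, by omega⟩
    have := Finset.single_le_sum (f := fun i => N / p ^ i) (fun i _ => Nat.zero_le _) h1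
    simpa using this
  · have : N / p = 0 := Nat.div_eq_of_lt h
    simp [this]

lemma chebyshev_aux {N : ℕ} (hN : 1 ≤ N) :
    ∑ p ∈ PP N, ((N / p : ℕ) : ℝ) * Real.log p ≤ N * Real.log N := by
  -- ∏_{p ≤ N} p^(N/p) divides N!
  have hdvd : (∏ p ∈ PP N, p ^ (N / p)) ∣ N ! := by
    have h1 : (∏ p ∈ PP N, p ^ (N / p)) ∣ ∏ p ∈ PP N, p ^ ((N !).factorization p) :=
      Finset.prod_dvd_prod_of_dvd _ _ fun p hp =>
        pow_dvd_pow p (div_le_factorization (mem_PP.1 hp).2 hN)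
    refine h1.trans ?_
    have h2 : PP N ⊆ (N !).factorization.support := by
      intro p hp
      obtain ⟨hple, hpp⟩ := mem_PP.1 hp
      rw [Nat.support_factorization, Nat.mem_primeFactors]
      exact ⟨hpp, hpp.dvd_factorial.2 hple, Nat.factorial_ne_zero N⟩
    have h3 := Finset.prod_dvd_prod_of_subset _ _ (fun p => p ^ ((N !).factorization p)) h2
    refine h3.trans ?_
    rw [← Finsupp.prod]
    exact (Nat.factorization_prod_pow_eq_self (Nat.factorial_ne_zero N)).dvd
  have hle : (∏ p ∈ PP N, p ^ (N / p)) ≤ N ! := Nat.le_of_dvd (Nat.factorial_pos N) hdvd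
  have hlog : Real.log (∏ p ∈ PP N, (p : ℝ) ^ (N / p)) ≤ Real.log (N ! : ℝ) := by
    apply Real.log_le_log
    · exact Finset.prod_pos fun p hp => pow_pos (by exact_mod_cast (mem_PP.1 hp).2.pos) _
    · exact_mod_cast hle
  have hfaclog : Real.log (N ! : ℝ) ≤ N * Real.log N := by
    calc Real.log (N ! : ℝ) ≤ Real.log ((N : ℝ) ^ N) := by
          apply Real.log_le_log
          · exact_mod_cast Nat.factorial_pos N
          · exact_mod_cast Nat.factorial_le_pow N
      _ = N * Real.log N := Real.log_pow N N
  calc ∑ p ∈ PP N, ((N / p : ℕ) : ℝ) * Real.log p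
      = Real.log (∏ p ∈ PP N, (p : ℝ) ^ (N / p)) := by
        rw [Real.log_prod]
        · refine Finset.sum_congr rfl fun p hp => ?_
          rw [Real.log_pow]
        · intro p hp
          have := (mem_PP.1 hp).2.pos
          positivity
    _ ≤ Real.log (N ! : ℝ) := hlog
    _ ≤ N * Real.log N := hfaclog

/-- Mertens' first theorem (upper bound). -/
lemma T_le {N : ℕ} (hN : 1 ≤ N) : T N ≤ Real.log N + Real.log 4 := by
  have hNpos : (0 : ℝ) < N := by exact_mod_cast hN
  have key : (N : ℝ) * T N ≤ N * Real.log N + N * Real.log 4 := by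
    have h1 : ∀ p ∈ PP N, (N : ℝ) * (Real.log p / p) ≤ ((N / p : ℕ) : ℝ) * Real.log p
        + Real.log p := by
      intro p hp
      obtain ⟨hple, hpp⟩ := mem_PP.1 hp
      have hppos : (0 : ℝ) < p := by exact_mod_cast hpp.pos
      have hlogp : (0 : ℝ) ≤ Real.log p := Real.log_natCast_nonneg p
      have hdivmod : (N : ℝ) = p * ((N / p : ℕ) : ℝ) + ((N % p : ℕ) : ℝ) := by
        exact_mod_cast (Nat.div_add_mod N p).symm
      have hmod : ((N % p : ℕ) : ℝ) ≤ p := by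
        exact_mod_cast (Nat.mod_lt N hpp.pos).le
      have hND : (N : ℝ) / p ≤ ((N / p : ℕ) : ℝ) + 1 := by
        rw [div_le_iff₀ hppos]
        nlinarith
      have : (N : ℝ) * (Real.log p / p) = (N : ℝ) / p * Real.log p := by ring
      rw [this]
      nlinarith
    calc (N : ℝ) * T N = ∑ p ∈ PP N, (N : ℝ) * (Real.log p / p) := by
          rw [T, Finset.mul_sum]
      _ ≤ ∑ p ∈ PP N, (((N / p : ℕ) : ℝ) * Real.log p + Real.log p) :=
          Finset.sum_le_sum h1
      _ = (∑ p ∈ PP N, ((N / p : ℕ) : ℝ) * Real.log p) + theta N := by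
          rw [Finset.sum_add_distrib]; rfl
      _ ≤ N * Real.log N + N * Real.log 4 :=
          add_le_add (chebyshev_aux hN) (theta_le N)
  nlinarith

/-- The Abel-summation potential. -/
def HH (n : ℕ) : ℝ :=
  Pr n - (T n - Real.log 4) / Real.log n - Real.log (Real.log n)

lemma HH_step {n : ℕ} (hn : 2 ≤ n) : HH (n + 1) ≤ HH n := by
  have hn2 : (2 : ℝ) ≤ (n : ℝ) := by exact_mod_cast hn
  have hL : (0 : ℝ) < Real.log n := Real.log_pos (by linarith)
  have hL' : (0 : ℝ) < Real.log (n + 1) := Real.log_pos (by linarith)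
  have hLL' : Real.log n ≤ Real.log (n + 1) := Real.log_le_log (by linarith) (by linarith)
  set L := Real.log (n : ℝ) with hLdef
  set L' := Real.log ((n : ℝ) + 1) with hL'def
  have hT : T n - Real.log 4 ≤ L := by
    have := T_le (N := n) (by omega)
    linarith
  have key : (T n - Real.log 4) / L - (T n - Real.log 4) / L' ≤ Real.log L' - Real.log L := by
    have h2 : 0 ≤ 1 / L - 1 / L' := by
      rw [sub_nonneg]
      exact one_div_le_one_div_of_le hL hLL'
    have h3 : (T n - Real.log 4) * (1 / L - 1 / L') ≤ L * (1 / L - 1 / L') :=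
      mul_le_mul_of_nonneg_right hT h2
    have h4 : L * (1 / L - 1 / L') = 1 - L / L' := by
      field_simp
    have h5 : Real.log (L / L') ≤ L / L' - 1 :=
      Real.log_le_sub_one_of_pos (by positivity)
    have h6 : Real.log (L / L') = Real.log L - Real.log L' := Real.log_div hL.ne' hL'.ne'
    have h7 : (T n - Real.log 4) / L - (T n - Real.log 4) / L'
        = (T n - Real.log 4) * (1 / L - 1 / L') := by ring
    rw [h7]
    nlinarith
  have hcast : ((n : ℝ) + 1) = ((n + 1 : ℕ) : ℝ) := by push_cast; ring
  unfold HH Pr T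
  rw [sum_PP_succ, sum_PP_succ]
  by_cases hp : (n + 1).Prime
  · simp only [hp, if_true]
    have hexp : ((∑ p ∈ PP n, Real.log p / p) + Real.log (n + 1 : ℕ) / (n + 1 : ℕ)
        - Real.log 4) / Real.log (n + 1 : ℕ)
        = (T n - Real.log 4) / Real.log (n + 1 : ℕ) + 1 / ((n : ℝ) + 1) := by
      rw [T]
      have h1 : ((n + 1 : ℕ) : ℝ) = (n : ℝ) + 1 := by push_cast; ring
      rw [h1, ← hL'def]
      field_simp
      ring
    rw [hexp]
    have h1 : ((n + 1 : ℕ) : ℝ) = (n : ℝ) + 1 := by push_cast; ring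
    rw [h1, ← hL'def, ← hLdef]
    have : (T n : ℝ) = ∑ p ∈ PP n, Real.log p / p := rfl
    rw [← this, ← Pr]
    linarith [key]
  · simp only [hp, if_false, add_zero]
    have h1 : ((n + 1 : ℕ) : ℝ) = (n : ℝ) + 1 := by push_cast; ring
    rw [h1, ← hL'def, ← hLdef]
    have hPr : (∑ p ∈ PP n, 1 / (p : ℝ)) = Pr n := rfl
    have hT2 : (∑ p ∈ PP n, Real.log p / p) = T n := rfl
    rw [hPr, hT2]
    linarith [key]

/-- Mertens' second theorem (upper bound with constant 1). -/
lemma Pr_le {N : ℕ} (hN : 2 ≤ N) :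
    Pr N ≤ Real.log (Real.log N) + (1 + HH 2) := by
  have hHH : HH N ≤ HH 2 := by
    induction N, hN using Nat.le_induction with
    | base => exact le_refl _
    | succ n hn ih => exact (HH_step hn).trans ih
  have hL : (0 : ℝ) < Real.log N :=
    Real.log_pos (by exact_mod_cast Nat.one_lt_cast.mpr (by omega))
  have hT : T N - Real.log 4 ≤ Real.log N := by
    have := T_le (N := N) (by omega)
    linarith
  have h1 : (T N - Real.log 4) / Real.log N ≤ 1 := by
    rw [div_le_one hL]
    exact hT
  have hdef : HH N = Pr N - (T N - Real.log 4) / Real.log N - Real.log (Real.log N) := rfl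
  linarith [hHH, h1, hdef.le, hdef.ge]

/-- `S m = Σ_{p | m} 1/(p-1)`. -/
def S (m : ℕ) : ℝ := ∑ p ∈ m.primeFactors, 1 / ((p : ℝ) - 1)

lemma sum_inv_mul_pred {y : ℕ} (hy : 2 ≤ y) :
    ∑ k ∈ Finset.Icc 2 y, 1 / ((k : ℝ) * ((k : ℝ) - 1)) = 1 - 1 / (y : ℝ) := by
  induction y, hy using Nat.le_induction with
  | base => norm_num
  | succ n hn ih =>
    rw [Finset.sum_Icc_succ_top (by omega)]
    rw [ih]
    have hn0 : (0 : ℝ) < (n : ℝ) := by exact_mod_cast (by omega : 0 < n)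
    push_cast
    field_simp
    ring_nf
    rw [mul_inv_cancel₀ hn0.ne']
    ring

lemma S_le {m y : ℕ} (hm : 1 ≤ m) (hy : 2 ≤ y) :
    S m ≤ Pr y + 1 + Real.log m / ((y : ℝ) * Real.log y) := by
  have hy0 : (0 : ℝ) < (y : ℝ) := by exact_mod_cast (by omega : 0 < y)
  have hlogy : (0 : ℝ) < Real.log y :=
    Real.log_pos (by exact_mod_cast Nat.one_lt_cast.mpr (by omega))
  rw [S, ← Finset.sum_filter_add_sum_filter_not m.primeFactors (· ≤ y)]
  have hsmall : ∑ p ∈ m.primeFactors.filter (· ≤ y), 1 / ((p : ℝ) - 1) ≤ Pr y + 1 := by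
    have hterm : ∀ p ∈ m.primeFactors.filter (· ≤ y),
        1 / ((p : ℝ) - 1) = 1 / (p : ℝ) + 1 / ((p : ℝ) * ((p : ℝ) - 1)) := by
      intro p hp
      have hpp := Nat.prime_of_mem_primeFactors (Finset.mem_filter.1 hp).1
      have h2 : (2 : ℝ) ≤ (p : ℝ) := by exact_mod_cast hpp.two_le
      have h0 : (p : ℝ) ≠ 0 := by linarith
      have h1 : (p : ℝ) - 1 ≠ 0 := by linarith
      field_simp
      ring
    rw [Finset.sum_congr rfl hterm, Finset.sum_add_distrib]
    have hsub1 : m.primeFactors.filter (· ≤ y) ⊆ PP y := by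
      intro p hp
      rw [Finset.mem_filter] at hp
      exact mem_PP.2 ⟨hp.2, Nat.prime_of_mem_primeFactors hp.1⟩
    have hsub2 : m.primeFactors.filter (· ≤ y) ⊆ Finset.Icc 2 y := by
      intro p hp
      rw [Finset.mem_filter] at hp
      exact Finset.mem_Icc.2 ⟨(Nat.prime_of_mem_primeFactors hp.1).two_le, hp.2⟩
    have hb1 : ∑ p ∈ m.primeFactors.filter (· ≤ y), 1 / (p : ℝ) ≤ Pr y := by
      apply Finset.sum_le_sum_of_subset_of_nonneg hsub1
      intro p hp _
      positivity
    have hb2 : ∑ p ∈ m.primeFactors.filter (· ≤ y), 1 / ((p : ℝ) * ((p : ℝ) - 1))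
        ≤ ∑ k ∈ Finset.Icc 2 y, 1 / ((k : ℝ) * ((k : ℝ) - 1)) := by
      apply Finset.sum_le_sum_of_subset_of_nonneg hsub2
      intro k hk _
      have h2 : (2 : ℝ) ≤ (k : ℝ) := by exact_mod_cast (Finset.mem_Icc.1 hk).1
      have : (0 : ℝ) < (k : ℝ) * ((k : ℝ) - 1) := by nlinarith
      positivity
    have hb3 := sum_inv_mul_pred hy
    have hy1 : 0 ≤ 1 / (y : ℝ) := by positivity
    calc _ ≤ Pr y + ∑ k ∈ Finset.Icc 2 y, 1 / ((k : ℝ) * ((k : ℝ) - 1)) :=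
          add_le_add hb1 hb2
      _ ≤ Pr y + 1 := by rw [hb3]; linarith
  have hbig : ∑ p ∈ m.primeFactors.filter (fun p => ¬ p ≤ y), 1 / ((p : ℝ) - 1)
      ≤ Real.log m / ((y : ℝ) * Real.log y) := by
    set F := m.primeFactors.filter (fun p => ¬ p ≤ y) with hF
    have hcard : (F.card : ℝ) * Real.log y ≤ Real.log m := by
      have hpow : y ^ F.card ≤ ∏ p ∈ F, p := by
        apply Finset.pow_card_le_prod
        intro p hp
        rw [hF, Finset.mem_filter] at hp
        omega
      have hdvd : (∏ p ∈ F, p) ∣ m := by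
        refine dvd_trans ?_ (Nat.prod_primeFactors_dvd m)
        exact Finset.prod_dvd_prod_of_subset _ _ _ (Finset.filter_subset _ _)
      have hle : y ^ F.card ≤ m := hpow.trans (Nat.le_of_dvd (by omega) hdvd)
      have : Real.log ((y : ℝ) ^ F.card) ≤ Real.log m := by
        apply Real.log_le_log (by positivity)
        exact_mod_cast hle
      rwa [Real.log_pow] at this
    have hterm : ∀ p ∈ F, 1 / ((p : ℝ) - 1) ≤ 1 / (y : ℝ) := by
      intro p hp
      rw [hF, Finset.mem_filter] at hp
      have : (y : ℝ) ≤ (p : ℝ) - 1 := by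
        have : y + 1 ≤ p := by omega
        have := (Nat.cast_le (α := ℝ)).2 this
        push_cast at this
        linarith
      exact one_div_le_one_div_of_le hy0 this
    calc ∑ p ∈ F, 1 / ((p : ℝ) - 1) ≤ ∑ _p ∈ F, 1 / (y : ℝ) :=
          Finset.sum_le_sum hterm
      _ = (F.card : ℝ) * (1 / (y : ℝ)) := by rw [Finset.sum_const, nsmul_eq_mul]
      _ ≤ (Real.log m / Real.log y) * (1 / (y : ℝ)) := by
          apply mul_le_mul_of_nonneg_right _ (by positivity)
          rw [le_div_iff₀ hlogy]
          exact hcard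
      _ = Real.log m / ((y : ℝ) * Real.log y) := by ring
  linarith

/-- Totient ratio lower bound via `exp(-S)`. -/
lemma totient_ratio_ge {m : ℕ} (hm : 1 ≤ m) :
    Real.exp (-(S m)) ≤ (Nat.totient m : ℝ) / m := by
  have hm0 : (0 : ℝ) < (m : ℝ) := by exact_mod_cast hm
  have hprod : (Nat.totient m : ℝ) / m = ∏ p ∈ m.primeFactors, (1 - (p : ℝ)⁻¹) := by
    have hq := Nat.totient_eq_mul_prod_factors m
    have hq' : ((Nat.totient m : ℚ) : ℝ) =
        (((m : ℚ) * ∏ p ∈ m.primeFactors, (1 - (p : ℚ)⁻¹) : ℚ) : ℝ) := by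
      exact_mod_cast congrArg (fun q : ℚ => (q : ℝ)) hq
    push_cast at hq'
    rw [hq']
    field_simp
  rw [hprod, S, ← Finset.sum_neg_distrib, Real.exp_sum]
  apply Finset.prod_le_prod
  · intro p _
    positivity
  · intro p hp
    have hpp := Nat.prime_of_mem_primeFactors hp
    have h2 : (2 : ℝ) ≤ (p : ℝ) := by exact_mod_cast hpp.two_le
    have ht : (0 : ℝ) < (p : ℝ) - 1 := by linarith
    have hexp : (p : ℝ) / ((p : ℝ) - 1) ≤ Real.exp (1 / ((p : ℝ) - 1)) := by
      have := Real.add_one_le_exp (1 / ((p : ℝ) - 1))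
      have heq : (p : ℝ) / ((p : ℝ) - 1) = 1 / ((p : ℝ) - 1) + 1 := by
        field_simp
        ring
      linarith
    have hppos : (0 : ℝ) < (p : ℝ) / ((p : ℝ) - 1) := by positivity
    have hinv : Real.exp (-(1 / ((p : ℝ) - 1))) ≤ ((p : ℝ) - 1) / (p : ℝ) := by
      rw [Real.exp_neg]
      have h1 : ((p : ℝ) / ((p : ℝ) - 1))⁻¹ = ((p : ℝ) - 1) / (p : ℝ) := by
        rw [inv_div]
      rw [← h1]
      exact inv_anti₀ hppos hexp
    have heq2 : ((p : ℝ) - 1) / (p : ℝ) = 1 - (p : ℝ)⁻¹ := by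
      field_simp
    linarith [hinv, heq2 ▸ hinv]

end

end CarmichaelLowerAux

/-- `Σ_{n ≤ x} φ(λ(n))/λ(n) ≫ x / log log x`, where `λ` is the Carmichael
function (the exponent of `(ℤ/nℤ)ˣ`). -/
theorem sum_totient_carmichael_ratio_lower :
    ∃ c : ℝ, 0 < c ∧ ∀ᶠ x : ℝ in atTop,
      (∑ n ∈ Finset.Icc 1 ⌊x⌋₊,
          (Nat.totient (Monoid.exponent (ZMod n)ˣ) : ℝ) /
            (Monoid.exponent (ZMod n)ˣ : ℝ)) ≥
        c * x / Real.log (Real.log x) := by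
  classical
  open CarmichaelLowerAux in
  refine ⟨Real.exp (-(HH 2 + 4)) / 2, by positivity, ?_⟩
  have h1 : ∀ᶠ x : ℝ in atTop, 8 ≤ Real.log x :=
    Real.tendsto_log_atTop.eventually_ge_atTop 8
  have h2 : ∀ᶠ x : ℝ in atTop, 1 ≤ Real.log (Real.log x) :=
    (Real.tendsto_log_atTop.comp Real.tendsto_log_atTop).eventually_ge_atTop 1
  have h3 : ∀ᶠ x : ℝ in atTop, (2 : ℝ) ≤ x := eventually_ge_atTop 2
  filter_upwards [h1, h2, h3] with x hx8 hxA hx2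
  set L := Real.log x with hLdef
  set A := Real.log L with hAdef
  have hApos : (0 : ℝ) < A := by linarith
  set y := ⌊L⌋₊ with hydef
  have hy8 : 8 ≤ y := Nat.le_floor (by exact_mod_cast hx8)
  have hyle : (y : ℝ) ≤ L := Nat.floor_le (by linarith)
  have hygt : L - 1 < (y : ℝ) := Nat.sub_one_lt_floor L
  have hyhalf : L / 2 ≤ (y : ℝ) := by linarith
  have hypos : (0 : ℝ) < (y : ℝ) := by
    have : (8 : ℝ) ≤ (y : ℝ) := by exact_mod_cast hy8
    linarith
  have hlogy1 : 1 ≤ Real.log y := by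
    rw [Real.le_log_iff_exp_le hypos]
    have h8y : (8 : ℝ) ≤ (y : ℝ) := by exact_mod_cast hy8
    have := Real.exp_one_lt_d9
    linarith
  have hlogyA : Real.log y ≤ A := Real.log_le_log hypos hyle
  -- per-term lower bound
  have hterm : ∀ n ∈ Finset.Icc 1 ⌊x⌋₊,
      Real.exp (-(HH 2 + 4)) / A ≤
        (Nat.totient (Monoid.exponent (ZMod n)ˣ) : ℝ) / (Monoid.exponent (ZMod n)ˣ : ℝ) := by
    intro n hn
    rw [Finset.mem_Icc] at hn
    obtain ⟨hn1, hn2⟩ := hn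
    haveI : NeZero n := ⟨by omega⟩
    set m := Monoid.exponent (ZMod n)ˣ with hmdef
    have hm1 : 1 ≤ m := Nat.one_le_iff_ne_zero.2 Monoid.exponent_ne_zero_of_finite
    have hmn : m ≤ n := by
      have hdvd : m ∣ Nat.card (ZMod n)ˣ := Group.exponent_dvd_nat_card
      have hcard : Nat.card (ZMod n)ˣ = Nat.totient n := by
        rw [Nat.card_eq_fintype_card, ZMod.card_units_eq_totient]
      have : m ≤ Nat.totient n := by
        apply Nat.le_of_dvd _ (hcard ▸ hdvd)
        exact Nat.totient_pos.2 (by omega)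
      exact this.trans (Nat.totient_le n)
    have hmx : (m : ℝ) ≤ x := by
      have h1 : (m : ℝ) ≤ (⌊x⌋₊ : ℝ) := by exact_mod_cast hmn.trans hn2
      have h2 : (⌊x⌋₊ : ℝ) ≤ x := Nat.floor_le (by linarith)
      linarith
    have hS : S m ≤ Real.log A + (HH 2 + 4) := by
      have hb := S_le (m := m) (y := y) hm1 (by omega)
      have hPr := Pr_le (N := y) (by omega)
      have hlogm : Real.log m ≤ L := by
        rw [hLdef]
        apply Real.log_le_log (by exact_mod_cast hm1) hmx
      have hlogm0 : 0 ≤ Real.log m := Real.log_natCast_nonneg m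
      have hfrac : Real.log m / ((y : ℝ) * Real.log y) ≤ 2 := by
        have hden : L / 2 ≤ (y : ℝ) * Real.log y := by
          nlinarith
        have hdenpos : (0 : ℝ) < (y : ℝ) * Real.log y := by nlinarith
        rw [div_le_iff₀ hdenpos]
        nlinarith
      have hloglogy : Real.log (Real.log y) ≤ Real.log A := by
        apply Real.log_le_log (by linarith) hlogyA
      calc S m ≤ Pr y + 1 + Real.log m / ((y : ℝ) * Real.log y) := hb
        _ ≤ (Real.log (Real.log y) + (1 + HH 2)) + 1 + 2 := by linarith
        _ ≤ Real.log A + (HH 2 + 4) := by linarith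
    have hexp : Real.exp (-(HH 2 + 4)) / A ≤ Real.exp (-(S m)) := by
      have : Real.exp (-(Real.log A + (HH 2 + 4))) ≤ Real.exp (-(S m)) :=
        Real.exp_le_exp.2 (by linarith)
      have h9 : Real.exp (-(Real.log A + (HH 2 + 4)))
          = Real.exp (-Real.log A) * Real.exp (-(HH 2 + 4)) := by
        rw [← Real.exp_add]; ring_nf
      have h10 : Real.exp (-Real.log A) = A⁻¹ := by
        rw [Real.exp_neg, Real.exp_log hApos]
      have h11 : Real.exp (-(HH 2 + 4)) / A = Real.exp (-(Real.log A + (HH 2 + 4))) := by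
        rw [h9, h10]; ring
      rw [h11]
      exact this
    exact hexp.trans (totient_ratio_ge hm1)
  -- sum the per-term bound
  have hsum : (⌊x⌋₊ : ℝ) * (Real.exp (-(HH 2 + 4)) / A) ≤
      ∑ n ∈ Finset.Icc 1 ⌊x⌋₊,
        (Nat.totient (Monoid.exponent (ZMod n)ˣ) : ℝ) / (Monoid.exponent (ZMod n)ˣ : ℝ) := by
    have := Finset.card_nsmul_le_sum (Finset.Icc 1 ⌊x⌋₊)
      (fun n => (Nat.totient (Monoid.exponent (ZMod n)ˣ) : ℝ) / (Monoid.exponent (ZMod n)ˣ : ℝ))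
      (Real.exp (-(HH 2 + 4)) / A) hterm
    rwa [Nat.card_Icc, nsmul_eq_mul, Nat.add_sub_cancel] at this
  have hfloor : x / 2 ≤ (⌊x⌋₊ : ℝ) := by
    have := Nat.sub_one_lt_floor x
    linarith
  have hfinal : Real.exp (-(HH 2 + 4)) / 2 * x / A ≤
      (⌊x⌋₊ : ℝ) * (Real.exp (-(HH 2 + 4)) / A) := by
    rw [div_le_iff₀ hApos]
    have hexppos : (0 : ℝ) < Real.exp (-(HH 2 + 4)) := Real.exp_pos _
    have : (⌊x⌋₊ : ℝ) * (Real.exp (-(HH 2 + 4)) / A) * A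
        = (⌊x⌋₊ : ℝ) * Real.exp (-(HH 2 + 4)) := by
      field_simp
    rw [this]
    nlinarith
  exact le_trans hfinal hsum
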